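/- Let (Ω, 𝓕, ℙ) be a probability space, d ≥ 1, x ∈ ℝ^d, and let C : Ω → ℝ^d be a square-integrable random vector satisfying 𝔼[‖C/r − x‖²] ≤ (1 − φ)·‖x‖² + σ_C for constants φ ∈ (0,1], r > 0, σ_C ≥ 0. Let q ∈ (0,1) and let B : Ω → {0,1} be a Bernoulli random variable with ℙ(B = 1) = q, independent of C. Define the privacy-enhanced compressor output C' = (1 − B)·C, i.e., C' equals C with probability 1 − q and equals 0 with probability q. Then 𝔼[‖C'/r − x‖²] ≤ (1 − φ(1 − q))·‖x‖² + (1 − q)·σ_C. -/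

import Mathlib

open MeasureTheory

/-- The privacy-enhanced compressor `C' = (1 − B)·C`, where `B` is a Bernoulli(q) variable
independent of `C`, still satisfies the general compressor assumption, with parameters
`φ' = φ(1 − q)` and `σ_C' = (1 − q)σ_C`. -/
theorem privacy_enhanced_compressor_bound {Ω : Type*} [MeasurableSpace Ω]
    (μ : Measure Ω) [IsProbabilityMeasure μ]
    (d : ℕ) (hd : 1 ≤ d) (x : EuclideanSpace ℝ (Fin d))
    (C : Ω → EuclideanSpace ℝ (Fin d)) (hC : MemLp C 2 μ)
    (φ r σC q : ℝ) (hφ0 : 0 < φ) (hφ1 : φ ≤ 1) (hr : 0 < r) (hσ : 0 ≤ σC)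
    (hq0 : 0 < q) (hq1 : q < 1)
    (h : ∫ ω, ‖r⁻¹ • C ω - x‖ ^ 2 ∂μ ≤ (1 - φ) * ‖x‖ ^ 2 + σC)
    (B : Ω → ℝ) (hBmeas : Measurable B) (hB01 : ∀ ω, B ω = 0 ∨ B ω = 1)
    (hBq : μ {ω | B ω = 1} = ENNReal.ofReal q)
    (hindep : ProbabilityTheory.IndepFun B C μ)
    (C' : Ω → EuclideanSpace ℝ (Fin d)) (hC' : ∀ ω, C' ω = (1 - B ω) • C ω) :
    ∫ ω, ‖r⁻¹ • C' ω - x‖ ^ 2 ∂μ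
      ≤ (1 - φ * (1 - q)) * ‖x‖ ^ 2 + (1 - q) * σC := by
  set f : Ω → ℝ := fun ω => ‖r⁻¹ • C ω - x‖ ^ 2 with hf
  -- integrability of f
  have hC2 : MemLp (fun ω => r⁻¹ • C ω - x) 2 μ := (hC.const_smul r⁻¹).sub (memLp_const x)
  have hfint : Integrable f μ := by
    have h0 := hC2.integrable_norm_rpow (by norm_num) (by norm_num)
    refine h0.congr (ae_of_all _ fun ω => ?_)
    show ‖r⁻¹ • C ω - x‖ ^ ((2 : ENNReal).toReal) = ‖r⁻¹ • C ω - x‖ ^ (2 : ℕ)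
    rw [show ((2 : ENNReal).toReal) = ((2 : ℕ) : ℝ) by norm_num, Real.rpow_natCast]
  -- B is {0,1}-valued, hence bounded
  have hBbd : ∀ ω, ‖B ω‖ ≤ 1 := by
    intro ω; rcases hB01 ω with h' | h' <;> simp [h']
  have hBint : Integrable B μ :=
    (integrable_const (1 : ℝ)).mono' hBmeas.aestronglyMeasurable (ae_of_all _ hBbd)
  -- ∫ B = q
  have hBset : MeasurableSet {ω | B ω = 1} := hBmeas (measurableSet_singleton 1)
  have hBeq : B = Set.indicator {ω | B ω = 1} (fun _ => (1 : ℝ)) := by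
    funext ω; rcases hB01 ω with h' | h' <;>
      simp [Set.indicator_apply, h', Set.mem_setOf_eq]
  have hBI : ∫ ω, B ω ∂μ = q := by
    rw [hBeq, integral_indicator_const _ hBset, measureReal_def, hBq, smul_eq_mul, mul_one,
      ENNReal.toReal_ofReal hq0.le]
  -- independence of (1 - B) and f
  have hind2 : ProbabilityTheory.IndepFun (fun ω => 1 - B ω) f μ := by
    have hψ : Measurable fun c : EuclideanSpace ℝ (Fin d) => ‖r⁻¹ • c - x‖ ^ 2 := by
      fun_prop
    exact hindep.comp (measurable_const.sub measurable_id) hψ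
  have h1Bint : Integrable (fun ω => 1 - B ω) μ := (integrable_const (1:ℝ)).sub hBint
  have hmul : ∫ ω, (1 - B ω) * f ω ∂μ = (1 - q) * ∫ ω, f ω ∂μ := by
    have h1B : ∫ ω, (1 - B ω) ∂μ = 1 - q := by
      rw [integral_sub (integrable_const 1) hBint, integral_const, hBI]; simp
    have hm := hind2.integral_mul_eq_mul_integral h1Bint.aestronglyMeasurable hfint.aestronglyMeasurable
    simpa [Pi.mul_apply, h1B] using hm
  -- pointwise decomposition
  have hpt : ∀ ω, ‖r⁻¹ • C' ω - x‖ ^ 2 = (1 - B ω) * f ω + B ω * ‖x‖ ^ 2 := by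
    intro ω
    rcases hB01 ω with h' | h'
    · simp [hC' ω, h', hf]
    · simp [hC' ω, h', hf, norm_neg]
  have hmint : Integrable (fun ω => (1 - B ω) * f ω) μ :=
    hfint.bdd_mul (measurable_const.sub hBmeas).aestronglyMeasurable
      (c := 2) (ae_of_all _ fun ω => by
        have := hBbd ω
        rw [Real.norm_eq_abs] at *
        rcases hB01 ω with h' | h' <;> simp [h'] <;> norm_num)
  have hsplit : ∫ ω, ‖r⁻¹ • C' ω - x‖ ^ 2 ∂μ
      = (1 - q) * (∫ ω, f ω ∂μ) + q * ‖x‖ ^ 2 := by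
    calc ∫ ω, ‖r⁻¹ • C' ω - x‖ ^ 2 ∂μ
        = ∫ ω, ((1 - B ω) * f ω + B ω * ‖x‖ ^ 2) ∂μ := by
          exact integral_congr_ae (ae_of_all _ hpt)
      _ = (∫ ω, (1 - B ω) * f ω ∂μ) + ∫ ω, B ω * ‖x‖ ^ 2 ∂μ :=
          integral_add hmint (hBint.mul_const _)
      _ = (1 - q) * (∫ ω, f ω ∂μ) + q * ‖x‖ ^ 2 := by
          rw [hmul, integral_mul_const, hBI]
  have hq1' : (0:ℝ) ≤ 1 - q := by linarith
  have hle : (1 - q) * (∫ ω, f ω ∂μ) ≤ (1 - q) * ((1 - φ) * ‖x‖ ^ 2 + σC) :=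
    mul_le_mul_of_nonneg_left h hq1'
  rw [hsplit]
  nlinarith [hle]
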